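/- Let L ⊆ ℝ^d be a convex polytope with L ⊆ −λL for some λ > 0. Then the origin belongs to the interior of L. -/

import Mathlib

open Pointwise

theorem origin_in_interior (d : ℕ) (lam : ℝ) (hlam : 0 < lam)
    (V : Finset (EuclideanSpace ℝ (Fin d)))
    (L : Set (EuclideanSpace ℝ (Fin d)))
    (hLpoly : L = convexHull ℝ (V : Set (EuclideanSpace ℝ (Fin d))))
    (hint : (interior L).Nonempty)
    (hL : L ⊆ (-lam) • L) :
    0 ∈ interior L := by
  obtain ⟨x, hx⟩ := hint
  have hconv : Convex ℝ L := hLpoly ▸ convex_convexHull ℝ _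
  have hxL : x ∈ L := interior_subset hx
  obtain ⟨y, hyL, hyx⟩ := hL hxL
  have hpos : (0:ℝ) < 1 + lam := by linarith
  have key : (1/(1+lam)) • x + (lam/(1+lam)) • y = 0 := by
    rw [← hyx]
    rw [smul_smul]
    rw [← add_smul]
    have : 1 / (1 + lam) * -lam + lam / (1 + lam) = 0 := by
      field_simp
      ring
    rw [this, zero_smul]
  have hmem := hconv.combo_interior_self_mem_interior hx hyL
    (by positivity : (0:ℝ) < 1/(1+lam))
    (by positivity : (0:ℝ) ≤ lam/(1+lam))
    (by field_simp)
  rwa [key] at hmem
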